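/- Let ω ⊂ ℝ² be a bounded open set with 0 ∈ ω, and define for a finite signed measure μ the norm ‖μ‖ := sup { ∫ φ dμ : φ ∈ W₀^{1,∞}(ω), ‖φ‖_∞ ≤ 1, ‖Dφ‖_∞ ≤ 1 }. Then there exists r > 0 (any r ≤ min{½ dist(0, ∂ω), 1} works) such that for all points a₁,…,aₙ and b₁,…,bₙ in the ball B(0,r), one has ‖∑_{i=1}^n δ_{a_i} − ∑_{i=1}^n δ_{b_i}‖ = min over permutations σ ∈ Sₙ of ∑_{i=1}^n |a_i − b_{σ(i)}|. -/

import Mathlib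

open Set

open List

variable {n : ℕ}

/-- weight of a walk starting at `s` passing through the list `M` in order. -/
def wkW (w : Fin n → Fin n → ℝ) : Fin n → List (Fin n) → ℝ
  | _, [] => 0
  | s, j :: l => w s j + wkW w j l

lemma wkW_cons (w : Fin n → Fin n → ℝ) (s j : Fin n) (l : List (Fin n)) :
    wkW w s (j :: l) = w s j + wkW w j l := rfl

lemma wkW_append (w : Fin n → Fin n → ℝ) (s i : Fin n) (l₁ l₂ : List (Fin n)) :
    wkW w s (l₁ ++ i :: l₂) = wkW w s (l₁ ++ [i]) + wkW w i l₂ := by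
  induction l₁ generalizing s with
  | nil => simp [wkW_cons, wkW]
  | cons a t ih =>
    rw [List.cons_append, wkW_cons, ih a, List.cons_append, wkW_cons]; ring

lemma wkW_eq_sum (w : Fin n → Fin n → ℝ) (M : List (Fin n)) (s d : Fin n) :
    wkW w s M = ∑ m ∈ Finset.range M.length, w ((s :: M).getD m d) (M.getD m d) := by
  induction M generalizing s with
  | nil => simp [wkW]
  | cons j t ih =>
    rw [wkW_cons, ih j, List.length_cons, Finset.sum_range_succ']
    simp [List.getD_cons_succ, List.getD_cons_zero, add_comm]

lemma cycle_nonneg (w : Fin n → Fin n → ℝ) (hdiag : ∀ i, w i i = 0)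
    (hperm : ∀ τ : Equiv.Perm (Fin n), 0 ≤ ∑ i, w i (τ i))
    (v : Fin n) (l : List (Fin n)) (hnd : (v :: l).Nodup) :
    0 ≤ wkW w v (l ++ [v]) := by
  classical
  set L := v :: l with hL
  set τ := L.formPerm with hτ
  have hlen : L.length = l.length + 1 := rfl
  have key : ∑ i, w i (τ i) = wkW w v (l ++ [v]) := by
    have h1 : ∑ i, w i (τ i) = ∑ i ∈ L.toFinset, w i (τ i) := by
      refine (Finset.sum_subset (Finset.subset_univ _) ?_).symm
      intro x _ hx
      rw [List.formPerm_apply_of_notMem (by simpa using hx), hdiag]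
    have h2 : ∑ i ∈ L.toFinset, w i (τ i)
        = ∑ m ∈ Finset.range L.length, w (L.getD m v) (τ (L.getD m v)) := by
      refine (Finset.sum_bij (fun (m : ℕ) (_ : m ∈ Finset.range L.length) => L.getD m v)
        ?_ ?_ ?_ ?_).symm
      · intro m hm
        rw [Finset.mem_range] at hm
        show L.getD m v ∈ L.toFinset
        rw [List.mem_toFinset, List.getD_eq_getElem _ _ hm]
        exact List.getElem_mem hm
      · intro m hm m' hm' hmm
        rw [Finset.mem_range] at hm hm'
        show m = m'
        have hinj := List.nodup_iff_injective_getElem.1 hnd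
        have : (⟨m, hm⟩ : Fin L.length) = ⟨m', hm'⟩ := by
          apply hinj
          show L[m] = L[m']
          rw [← List.getD_eq_getElem _ v hm, ← List.getD_eq_getElem _ v hm']
          exact hmm
        exact congrArg Fin.val this
      · intro x hx
        rw [List.mem_toFinset] at hx
        obtain ⟨m, hm, hmx⟩ := List.mem_iff_getElem.1 hx
        exact ⟨m, Finset.mem_range.2 hm, by
          show L.getD m v = x
          rw [List.getD_eq_getElem _ _ hm, hmx]⟩
      · intro m hm; rfl
    have h3 : ∀ m ∈ Finset.range L.length,
        w (L.getD m v) (τ (L.getD m v))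
          = w ((v :: (l ++ [v])).getD m v) ((l ++ [v]).getD m v) := by
      intro m hm
      rw [Finset.mem_range, hlen] at hm
      have hmL : m < L.length := by rw [hlen]; omega
      have e1 : (v :: (l ++ [v])).getD m v = L.getD m v := by
        have hcons : v :: (l ++ [v]) = L ++ [v] := by rw [hL]; rfl
        rw [hcons, List.getD_eq_getElem _ _ (by rw [List.length_append]; omega),
          List.getD_eq_getElem _ _ hmL]
        exact List.getElem_append_left hmL
      have e2 : τ (L.getD m v) = (l ++ [v]).getD m v := by
        rw [List.getD_eq_getElem _ _ hmL, hτ, List.formPerm_apply_getElem _ hnd _ hmL]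
        rcases Nat.lt_or_ge m l.length with hml | hml
        · have h4 : (m + 1) % L.length = m + 1 := Nat.mod_eq_of_lt (by rw [hlen]; omega)
          rw [List.getD_eq_getElem _ _ (by rw [List.length_append]; simp; omega)]
          have : (l ++ [v])[m]'(by rw [List.length_append]; simp; omega) = l[m] :=
            List.getElem_append_left hml
          rw [this]
          have : L[(m + 1) % L.length]'(Nat.mod_lt _ (by rw [hlen]; omega)) = L[m+1]'(by rw [hlen]; omega) := by
            congr 1
          rw [this]
          rfl
        · have hml' : m = l.length := by omega
          have h4 : (m + 1) % L.length = 0 := by rw [hlen, hml']; simp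
          have e5 : L[(m + 1) % L.length]'(Nat.mod_lt _ (by rw [hlen]; omega)) = L[0]'(by rw [hlen]; omega) := by
            congr 1
          rw [e5]
          have e6 : (l ++ [v]).getD m v = v := by
            rw [List.getD_eq_getElem _ _ (by rw [List.length_append, List.length_singleton]; omega)]
            exact List.getElem_concat_length hml' _
          rw [e6]
          rfl
      rw [e1, e2]
    rw [h1, h2, wkW_eq_sum w (l ++ [v]) v v]
    refine Finset.sum_congr (by rw [List.length_append, List.length_singleton, hlen]) ?_
    intro x hx
    refine h3 x ?_
    rw [Finset.mem_range, List.length_append, List.length_singleton] at hx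
    rw [Finset.mem_range, hlen]
    omega
  rw [← key]
  exact hperm τ

lemma exists_dup_split {α : Type*} (l : List α) (h : ¬ l.Nodup) :
    ∃ (a : α) (l₁ l₂ l₃ : List α), l = l₁ ++ a :: l₂ ++ a :: l₃ := by
  classical
  induction l with
  | nil => simp at h
  | cons x t ih =>
    by_cases hx : x ∈ t
    · obtain ⟨s, u, rfl⟩ := List.append_of_mem hx
      exact ⟨x, [], s, u, by simp⟩
    · have ht : ¬ t.Nodup := by simpa [List.nodup_cons, hx] using h
      obtain ⟨a, l₁, l₂, l₃, rfl⟩ := ih ht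
      exact ⟨a, x :: l₁, l₂, l₃, by simp⟩

lemma closed_nonneg (w : Fin n → Fin n → ℝ) (hdiag : ∀ i, w i i = 0)
    (hperm : ∀ τ : Equiv.Perm (Fin n), 0 ≤ ∑ i, w i (τ i)) :
    ∀ (k : ℕ) (v : Fin n) (l : List (Fin n)), l.length ≤ k → 0 ≤ wkW w v (l ++ [v]) := by
  intro k
  induction k with
  | zero =>
    intro v l hl
    rw [List.length_eq_zero_iff.1 (Nat.le_zero.1 hl)]
    simp [wkW_cons, wkW, hdiag]
  | succ k ih =>
    intro v l hl
    by_cases hnd : (v :: l).Nodup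
    · exact cycle_nonneg w hdiag hperm v l hnd
    rw [List.nodup_cons, not_and_or] at hnd
    by_cases hv : v ∈ l
    · obtain ⟨s, u, rfl⟩ := List.append_of_mem hv
      have hlen := hl
      rw [List.length_append, List.length_cons] at hlen
      have e : (s ++ v :: u) ++ [v] = s ++ v :: (u ++ [v]) := by simp
      rw [e, wkW_append]
      have h1 := ih v s (by omega)
      have h2 := ih v u (by omega)
      linarith
    · have hnd' : ¬ l.Nodup := by tauto
      obtain ⟨a, l₁, l₂, l₃, rfl⟩ := exists_dup_split l hnd'
      have hlen := hl
      rw [List.length_append, List.length_cons, List.length_append, List.length_cons] at hlen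
      have e : (l₁ ++ a :: l₂ ++ a :: l₃) ++ [v] = l₁ ++ a :: (l₂ ++ a :: (l₃ ++ [v])) := by simp
      rw [e, wkW_append w v a l₁ (l₂ ++ a :: (l₃ ++ [v])), wkW_append w a a l₂ (l₃ ++ [v])]
      have h1 : 0 ≤ wkW w a (l₂ ++ [a]) := ih a l₂ (by omega)
      have h2 : 0 ≤ wkW w v ((l₁ ++ a :: l₃) ++ [v]) := ih v (l₁ ++ a :: l₃) (by
        rw [List.length_append, List.length_cons]; omega)
      rw [show (l₁ ++ a :: l₃) ++ [v] = l₁ ++ a :: (l₃ ++ [v]) by simp,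
        wkW_append w v a l₁ (l₃ ++ [v])] at h2
      linarith

lemma wkW_ge (w : Fin n → Fin n → ℝ) (B : ℝ) (hB : ∀ i j, -B ≤ w i j) :
    ∀ (M : List (Fin n)) (s : Fin n), -(M.length * B) ≤ wkW w s M := by
  intro M
  induction M with
  | nil => intro s; simp [wkW]
  | cons j t ih =>
    intro s
    rw [wkW_cons]
    have h1 := hB s j
    have h2 := ih j
    rw [List.length_cons]
    push_cast
    linarith

lemma walk_lb (w : Fin n → Fin n → ℝ) (hdiag : ∀ i, w i i = 0)
    (hperm : ∀ τ : Equiv.Perm (Fin n), 0 ≤ ∑ i, w i (τ i))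
    (B : ℝ) (hB : ∀ i j, -B ≤ w i j) (hB0 : 0 ≤ B) :
    ∀ (k : ℕ) (s j : Fin n) (l : List (Fin n)), l.length ≤ k →
      -((n + 1) * B) ≤ wkW w s (l ++ [j]) := by
  intro k
  induction k with
  | zero =>
    intro s j l hl
    rw [List.length_eq_zero_iff.1 (Nat.le_zero.1 hl)]
    have := hB s j
    have hn1 : (1 : ℝ) * B ≤ (n + 1) * B := by
      have : (1:ℝ) ≤ (n:ℝ) + 1 := by
        have : (0:ℝ) ≤ (n:ℝ) := Nat.cast_nonneg n
        linarith
      nlinarith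
    simp only [List.nil_append, wkW_cons, wkW]
    linarith
  | succ k ih =>
    intro s j l hl
    by_cases hsj : s = j
    · subst hsj
      have h0 := closed_nonneg w hdiag hperm (k+1) s l hl
      nlinarith [Nat.cast_nonneg (α := ℝ) n]
    by_cases hsl : s ∈ l
    · obtain ⟨l₁, l₂, rfl⟩ := List.append_of_mem hsl
      have hlen := hl
      rw [List.length_append, List.length_cons] at hlen
      rw [show (l₁ ++ s :: l₂) ++ [j] = l₁ ++ s :: (l₂ ++ [j]) by simp,
        wkW_append w s s l₁ (l₂ ++ [j])]
      have h1 := closed_nonneg w hdiag hperm k s l₁ (by omega)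
      have h2 := ih s j l₂ (by omega)
      linarith
    by_cases hjl : j ∈ l
    · obtain ⟨l₁, l₂, rfl⟩ := List.append_of_mem hjl
      have hlen := hl
      rw [List.length_append, List.length_cons] at hlen
      rw [show (l₁ ++ j :: l₂) ++ [j] = l₁ ++ j :: (l₂ ++ [j]) by simp,
        wkW_append w s j l₁ (l₂ ++ [j])]
      have h1 := ih s j l₁ (by omega)
      have h2 := closed_nonneg w hdiag hperm k j l₂ (by omega)
      linarith
    by_cases hnd : l.Nodup
    · -- the whole list s :: (l ++ [j]) is nodup hence short
      have hnodup : (s :: (l ++ [j])).Nodup := by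
        rw [List.nodup_cons, List.mem_append]
        constructor
        · rintro (h | h)
          · exact hsl h
          · rw [List.mem_singleton] at h; exact hsj h
        · rw [List.nodup_append]
          exact ⟨hnd, List.nodup_singleton j, by
            intro x hx y hy hxy
            rw [List.mem_singleton] at hy
            subst hy hxy
            exact hjl hx⟩
      have hcard : (s :: (l ++ [j])).length ≤ n := hnodup.length_le_card.trans (by simp)
      rw [List.length_cons, List.length_append, List.length_singleton] at hcard
      have hwge := wkW_ge w B hB (l ++ [j]) s
      rw [List.length_append, List.length_singleton] at hwge
      have : ((l.length + 1 : ℕ) : ℝ) * B ≤ ((n:ℝ) + 1) * B := by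
        apply mul_le_mul_of_nonneg_right _ hB0
        push_cast
        have : l.length + 2 ≤ n := hcard
        have : (l.length : ℝ) + 2 ≤ (n : ℝ) := by exact_mod_cast this
        linarith
      linarith
    · obtain ⟨a, l₁, l₂, l₃, rfl⟩ := exists_dup_split l hnd
      have hlen := hl
      rw [List.length_append, List.length_cons, List.length_append, List.length_cons] at hlen
      rw [show (l₁ ++ a :: l₂ ++ a :: l₃) ++ [j] = l₁ ++ a :: (l₂ ++ a :: (l₃ ++ [j])) by simp,
        wkW_append w s a l₁ (l₂ ++ a :: (l₃ ++ [j])), wkW_append w a a l₂ (l₃ ++ [j])]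
      have h1 := closed_nonneg w hdiag hperm k a l₂ (by omega)
      have h2 := ih s j (l₁ ++ a :: l₃) (by rw [List.length_append, List.length_cons]; omega)
      rw [show (l₁ ++ a :: l₃) ++ [j] = l₁ ++ a :: (l₃ ++ [j]) by simp,
        wkW_append w s a l₁ (l₃ ++ [j])] at h2
      linarith

lemma exists_potential (w : Fin n → Fin n → ℝ) (hdiag : ∀ i, w i i = 0)
    (hperm : ∀ τ : Equiv.Perm (Fin n), 0 ≤ ∑ i, w i (τ i)) :
    ∃ p : Fin n → ℝ, ∀ i j, p j ≤ p i + w i j := by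
  classical
  rcases Nat.eq_zero_or_pos n with hn | hn
  · subst hn
    exact ⟨fun _ => 0, fun i => i.elim0⟩
  obtain ⟨B, hB⟩ : ∃ B : ℝ, ∀ q : Fin n × Fin n, |w q.1 q.2| ≤ B :=
    Finite.exists_le _
  have hB0 : 0 ≤ B := le_trans (abs_nonneg _) (hB (⟨0, hn⟩, ⟨0, hn⟩))
  have hBw : ∀ i j, -B ≤ w i j := fun i j => neg_le_of_abs_le (hB (i, j))
  set S : Fin n → Set ℝ :=
    fun j => insert (0:ℝ) {x | ∃ s l, x = wkW w s (l ++ [j])} with hS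
  have hSne : ∀ j, (S j).Nonempty := fun j => ⟨0, Or.inl rfl⟩
  have hSbdd : ∀ j, BddBelow (S j) := by
    intro j
    refine ⟨-((n + 1) * B), ?_⟩
    rintro x (rfl | ⟨s, l, rfl⟩)
    · simp; positivity
    · exact walk_lb w hdiag hperm B hBw hB0 l.length s j l le_rfl
  refine ⟨fun j => sInf (S j), ?_⟩
  intro i j
  have key : ∀ x ∈ S i, sInf (S j) ≤ x + w i j := by
    rintro x (rfl | ⟨s, l, rfl⟩)
    · rw [zero_add]
      refine csInf_le (hSbdd j) ?_
      exact Or.inr ⟨i, [], by simp [wkW_cons, wkW]⟩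
    · refine csInf_le (hSbdd j) (Or.inr ⟨s, l ++ [i], ?_⟩)
      rw [show (l ++ [i]) ++ [j] = l ++ i :: [j] by simp, wkW_append w s i l [j]]
      simp [wkW_cons, wkW]
  have := le_csInf (hSne i) (fun x hx => by linarith [key x hx] :
    ∀ x ∈ S i, sInf (S j) - w i j ≤ x)
  linarith

lemma assignment_potentials (c : Fin n → Fin n → ℝ)
    (hopt : ∀ τ : Equiv.Perm (Fin n), ∑ i, c i i ≤ ∑ i, c i (τ i)) :
    ∃ p : Fin n → ℝ, ∀ i j, p j ≤ p i + (c i j - c i i) := by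
  refine exists_potential (fun i j => c i j - c i i) (by simp) ?_
  intro τ
  have h := hopt τ
  have hsum : ∑ i, (c i (τ i) - c i i) = ∑ i, c i (τ i) - ∑ i, c i i :=
    Finset.sum_sub_distrib _ _
  show (0:ℝ) ≤ ∑ i, (c i (τ i) - c i i)
  rw [hsum]
  linarith

lemma lipschitzWith_inf' {α : Type*} [PseudoMetricSpace α] {ι : Type*} (s : Finset ι)
    (hs : s.Nonempty) (f : ι → α → ℝ) (hf : ∀ i, LipschitzWith 1 (f i)) :
    LipschitzWith 1 fun x => s.inf' hs fun i => f i x := by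
  induction hs using Finset.Nonempty.cons_induction with
  | singleton i => simpa using hf i
  | cons i s hi hs ih =>
    have he : (fun x => (Finset.cons i s hi).inf' (Finset.cons_nonempty hi) fun j => f j x)
        = fun x => min (f i x) (s.inf' hs fun j => f j x) := by
      funext x
      exact Finset.inf'_cons (H := hs) (f := fun j => f j x)
    rw [he]
    have := (hf i).min ih
    simpa using this
open Set

section Helpers

lemma lipschitzWith_one_add_const {α : Type*} [PseudoMetricSpace α] {f : α → ℝ}
    (hf : LipschitzWith 1 f) (c : ℝ) : LipschitzWith 1 fun x => f x + c :=
  LipschitzWith.of_dist_le_mul fun x y => by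
    rw [dist_add_right]
    simpa using hf.dist_le_mul x y

lemma lipschitzWith_one_neg' {α : Type*} [PseudoMetricSpace α] {f : α → ℝ}
    (hf : LipschitzWith 1 f) : LipschitzWith 1 fun x => -(f x) :=
  LipschitzWith.of_dist_le_mul fun x y => by
    rw [dist_neg_neg]
    simpa using hf.dist_le_mul x y

end Helpers


/-- on a bounded open set `ω ∋ 0`, the `W^{-1,1}`-type dual norm of the
difference of two sums of `n` Dirac masses whose atoms lie in a small ball `B(0,r)`
equals the minimal matching distance between the two configurations. -/
theorem stmt1 (ω : Set (EuclideanSpace ℝ (Fin 2))) (hω : IsOpen ω)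
    (hbdd : Bornology.IsBounded ω) (h0 : (0 : EuclideanSpace ℝ (Fin 2)) ∈ ω) :
    ∃ r > 0, ∀ (n : ℕ) (a b : Fin n → EuclideanSpace ℝ (Fin 2)),
      (∀ i, a i ∈ Metric.ball (0 : EuclideanSpace ℝ (Fin 2)) r) →
      (∀ i, b i ∈ Metric.ball (0 : EuclideanSpace ℝ (Fin 2)) r) →
      sSup {s : ℝ | ∃ φ : EuclideanSpace ℝ (Fin 2) → ℝ, LipschitzWith 1 φ ∧
          (∀ x, |φ x| ≤ 1) ∧ (∀ x ∉ ω, φ x = 0) ∧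
          s = (∑ i, φ (a i)) - ∑ i, φ (b i)}
        = ⨅ σ : Equiv.Perm (Fin n), ∑ i, dist (a i) (b (σ i)) := by
  classical
  -- the complement is a nonempty closed set
  have hne : (ωᶜ : Set (EuclideanSpace ℝ (Fin 2))).Nonempty := by
    rcases Set.eq_empty_or_nonempty ωᶜ with h | h
    · exfalso
      have huniv : ω = Set.univ := by rw [← Set.compl_empty_iff]; exact h
      obtain ⟨R, hR⟩ := hbdd.subset_closedBall 0
      obtain ⟨x, hx⟩ := NormedSpace.exists_lt_norm ℝ (EuclideanSpace ℝ (Fin 2)) R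
      have hxω : x ∈ ω := huniv ▸ Set.mem_univ x
      have := hR hxω
      rw [Metric.mem_closedBall, dist_zero_right] at this
      linarith
    · exact h
  have hcl : IsClosed (ωᶜ : Set (EuclideanSpace ℝ (Fin 2))) := hω.isClosed_compl
  have hd0 : 0 < Metric.infDist (0 : EuclideanSpace ℝ (Fin 2)) ωᶜ :=
    (hcl.notMem_iff_infDist_pos hne).1 (by simp [h0])
  set d0 := Metric.infDist (0 : EuclideanSpace ℝ (Fin 2)) ωᶜ with hd0def
  set r := min 1 (d0 / 2) with hrdef
  have hr1 : r ≤ 1 := min_le_left _ _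
  have hrd : r ≤ d0 / 2 := min_le_right _ _
  have hr0 : 0 < r := lt_min one_pos (by linarith)
  refine ⟨r, hr0, ?_⟩
  intro n a b ha hb
  set f : Equiv.Perm (Fin n) → ℝ := fun σ => ∑ i, dist (a i) (b (σ i)) with hfdef
  -- upper bound for members of the dual set
  have hub : ∀ (φ : EuclideanSpace ℝ (Fin 2) → ℝ), LipschitzWith 1 φ →
      ∀ σ : Equiv.Perm (Fin n), (∑ i, φ (a i)) - ∑ i, φ (b i) ≤ f σ := by
    intro φ hφ σ
    have h1 : ∑ i, φ (b i) = ∑ i, φ (b (σ i)) :=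
      (Equiv.sum_comp σ fun i => φ (b i)).symm
    rw [h1, ← Finset.sum_sub_distrib]
    apply Finset.sum_le_sum
    intro i _
    have h2 := hφ.dist_le_mul (a i) (b (σ i))
    rw [Real.dist_eq] at h2
    calc φ (a i) - φ (b (σ i)) ≤ |φ (a i) - φ (b (σ i))| := le_abs_self _
      _ ≤ dist (a i) (b (σ i)) := by simpa using h2
  have hS0 : (0:ℝ) ∈ {s : ℝ | ∃ φ : EuclideanSpace ℝ (Fin 2) → ℝ, LipschitzWith 1 φ ∧
      (∀ x, |φ x| ≤ 1) ∧ (∀ x ∉ ω, φ x = 0) ∧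
      s = (∑ i, φ (a i)) - ∑ i, φ (b i)} :=
    ⟨fun _ => 0, LipschitzWith.const' 0, by simp, fun _ _ => rfl, by simp⟩
  have hSbdd : BddAbove {s : ℝ | ∃ φ : EuclideanSpace ℝ (Fin 2) → ℝ, LipschitzWith 1 φ ∧
      (∀ x, |φ x| ≤ 1) ∧ (∀ x ∉ ω, φ x = 0) ∧
      s = (∑ i, φ (a i)) - ∑ i, φ (b i)} := by
    refine ⟨f 1, ?_⟩
    rintro s ⟨φ, hφ, -, -, rfl⟩
    exact hub φ hφ 1
  obtain ⟨σ₀, -, hσ₀⟩ := Finset.exists_min_image Finset.univ f ⟨1, Finset.mem_univ 1⟩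
  -- key step : there is an admissible φ realizing at least `f σ₀`
  have key : ∃ s' ∈ {s : ℝ | ∃ φ : EuclideanSpace ℝ (Fin 2) → ℝ, LipschitzWith 1 φ ∧
      (∀ x, |φ x| ≤ 1) ∧ (∀ x ∉ ω, φ x = 0) ∧
      s = (∑ i, φ (a i)) - ∑ i, φ (b i)}, f σ₀ ≤ s' := by
    rcases Nat.eq_zero_or_pos n with hn | hn
    · subst hn
      exact ⟨0, hS0, by simp [hfdef]⟩
    have hFn : Nonempty (Fin n) := ⟨⟨0, hn⟩⟩
    have hopt : ∀ τ : Equiv.Perm (Fin n),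
        ∑ i, dist (a i) (b (σ₀ i)) ≤ ∑ i, dist (a i) (b (σ₀ (τ i))) := by
      intro τ
      have h2 := hσ₀ (σ₀ * τ) (Finset.mem_univ _)
      simpa [hfdef, Equiv.Perm.mul_apply] using h2
    obtain ⟨p, hp⟩ := assignment_potentials (fun i j => dist (a i) (b (σ₀ j))) hopt
    set ψ₀ : EuclideanSpace ℝ (Fin 2) → ℝ :=
      fun x => Finset.univ.inf' Finset.univ_nonempty (fun j => dist x (b (σ₀ j)) + (- p j))
      with hψ₀def
    have hψ₀lip : LipschitzWith 1 ψ₀ :=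
      lipschitzWith_inf' _ _ _ (fun j =>
        lipschitzWith_one_add_const (LipschitzWith.dist_left (b (σ₀ j))) (- p j))
    have hψb : ∀ k, ψ₀ (b (σ₀ k)) ≤ - p k := by
      intro k
      have h3 := Finset.inf'_le
        (fun j => dist (b (σ₀ k)) (b (σ₀ j)) + (- p j)) (Finset.mem_univ k)
      have h4 : ψ₀ (b (σ₀ k)) = Finset.univ.inf' ⟨k, Finset.mem_univ k⟩
          (fun j => dist (b (σ₀ k)) (b (σ₀ j)) + (- p j)) := rfl
      rw [h4]
      refine le_trans h3 (le_of_eq ?_)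
      simp
    have hψa : ∀ i, dist (a i) (b (σ₀ i)) + (- p i) ≤ ψ₀ (a i) := by
      intro i
      apply Finset.le_inf'
      intro j _
      have h4 := hp i j
      linarith
    set ψ : EuclideanSpace ℝ (Fin 2) → ℝ := fun x => ψ₀ x + (-(ψ₀ 0)) with hψdef
    set g : EuclideanSpace ℝ (Fin 2) → ℝ := fun x => min 1 (Metric.infDist x ωᶜ) with hgdef
    set φ : EuclideanSpace ℝ (Fin 2) → ℝ := fun x => max (-(g x)) (min (ψ x) (g x)) with hφdef
    have hψlip : LipschitzWith 1 ψ := lipschitzWith_one_add_const hψ₀lip _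
    have hglip : LipschitzWith 1 g := by
      have h1 : LipschitzWith 1 (fun _ : EuclideanSpace ℝ (Fin 2) => (1:ℝ)) :=
        LipschitzWith.const' 1
      have h2 := h1.min (Metric.lipschitz_infDist_pt (ωᶜ : Set (EuclideanSpace ℝ (Fin 2))))
      simpa using h2
    have hφlip : LipschitzWith 1 φ := by
      have h2 := (lipschitzWith_one_neg' hglip).max (hψlip.min hglip)
      simpa using h2
    have hg0 : ∀ x, 0 ≤ g x := fun x => le_min zero_le_one Metric.infDist_nonneg
    have hg1 : ∀ x, g x ≤ 1 := fun x => min_le_left _ _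
    have hφ1 : ∀ x, |φ x| ≤ 1 := by
      intro x
      rw [abs_le]
      constructor
      · calc (-1 : ℝ) ≤ -(g x) := by linarith [hg1 x]
          _ ≤ φ x := le_max_left _ _
      · apply max_le
        · linarith [hg0 x]
        · exact le_trans (min_le_right _ _) (hg1 x)
    have hφ0 : ∀ x ∉ ω, φ x = 0 := by
      intro x hx
      have hgx : g x = 0 := by
        have : Metric.infDist x ωᶜ = 0 := Metric.infDist_zero_of_mem hx
        rw [hgdef]
        simp [this]
      show max (-(g x)) (min (ψ x) (g x)) = 0
      rw [hgx]
      simp only [neg_zero]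
      exact max_eq_left (min_le_right _ _)
    have hpt : ∀ q : EuclideanSpace ℝ (Fin 2), dist q 0 < r → φ q = ψ q := by
      intro q hq
      have habs : |ψ q| ≤ dist q 0 := by
        have h5 := hψ₀lip.dist_le_mul q 0
        rw [Real.dist_eq] at h5
        have : ψ q = ψ₀ q - ψ₀ 0 := by rw [hψdef]; ring
        rw [this]
        simpa using h5
      have hprox : r ≤ g q := by
        apply le_min hr1
        have h6 : d0 ≤ Metric.infDist q ωᶜ + dist 0 q :=
          Metric.infDist_le_infDist_add_dist
        rw [dist_comm] at h6
        linarith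
      have h1 : ψ q ≤ g q := by
        calc ψ q ≤ |ψ q| := le_abs_self _
          _ ≤ dist q 0 := habs
          _ ≤ g q := le_trans hq.le hprox
      have h2 : -(g q) ≤ ψ q := by
        have := neg_abs_le (ψ q)
        have h7 : -(g q) ≤ -|ψ q| := by
          have : |ψ q| ≤ g q := le_trans habs (le_trans hq.le hprox)
          linarith
        linarith
      show max (-(g q)) (min (ψ q) (g q)) = ψ q
      rw [min_eq_left h1, max_eq_right h2]
    refine ⟨(∑ i, φ (a i)) - ∑ i, φ (b i), ⟨φ, hφlip, hφ1, hφ0, rfl⟩, ?_⟩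
    have ea : ∀ i, φ (a i) = ψ (a i) := fun i => hpt _ (by
      have := ha i; rwa [Metric.mem_ball] at this)
    have eb : ∀ i, φ (b i) = ψ (b i) := fun i => hpt _ (by
      have := hb i; rwa [Metric.mem_ball] at this)
    rw [Finset.sum_congr rfl (fun i _ => ea i), Finset.sum_congr rfl (fun i _ => eb i)]
    have e1 : ∑ i, ψ (a i) = (∑ i, ψ₀ (a i)) + ∑ _i : Fin n, (-(ψ₀ 0)) := by
      rw [← Finset.sum_add_distrib]
    have e2 : ∑ i, ψ (b i) = (∑ i, ψ₀ (b i)) + ∑ _i : Fin n, (-(ψ₀ 0)) := by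
      rw [← Finset.sum_add_distrib]
    have hsumb : ∑ i, ψ₀ (b i) = ∑ i, ψ₀ (b (σ₀ i)) :=
      (Equiv.sum_comp σ₀ fun i => ψ₀ (b i)).symm
    have h5 : ∑ i, ψ₀ (b (σ₀ i)) ≤ ∑ i, (- p i) :=
      Finset.sum_le_sum fun i _ => hψb i
    have h6 : ∑ i, (dist (a i) (b (σ₀ i)) + (- p i)) ≤ ∑ i, ψ₀ (a i) :=
      Finset.sum_le_sum fun i _ => hψa i
    rw [Finset.sum_add_distrib] at h6
    have hfd : f σ₀ = ∑ i, dist (a i) (b (σ₀ i)) := rfl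
    rw [e1, e2, hfd]
    rw [hsumb] at *
    linarith
  -- conclude
  apply _root_.le_antisymm
  · refine csSup_le ⟨0, hS0⟩ ?_
    rintro s ⟨φ, hφ, -, -, rfl⟩
    exact le_ciInf fun σ => hub φ hφ σ
  · obtain ⟨s', hs'S, hs'⟩ := key
    have hbb : BddBelow (Set.range f) := by
      refine ⟨0, ?_⟩
      rintro x ⟨σ, rfl⟩
      exact Finset.sum_nonneg fun i _ => dist_nonneg
    have h7 : (⨅ σ : Equiv.Perm (Fin n), f σ) ≤ f σ₀ := ciInf_le hbb σ₀
    exact h7.trans (hs'.trans (le_csSup hSbdd hs'S))
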